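/- Let k ≥ 2 and n ≥ 1, and let w be a word of length N = k^n over the alphabet Σ_k such that γ_n(w) = k^n (i.e., w is an ordinary circular de Bruijn word of order n). Then γ_i(w) = min(k^i, k^n) for all i with 0 ≤ i ≤ k^n; that is, w is a generalized de Bruijn word. -/

import Mathlib

def gamma {k : ℕ} (w : List (Fin k)) (i : ℕ) : ℕ :=
  ((Finset.range w.length).image (fun j => ((w ++ w).drop j).take i)).card

theorem stmt_1 (k n : ℕ) (hk : 2 ≤ k) (hn : 1 ≤ n)
    (w : List (Fin k)) (hw : w.length = k ^ n)
    (hdb : gamma w n = k ^ n) :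
    ∀ i ≤ k ^ n, gamma w i = min (k ^ i) (k ^ n) := by
  haveI : NeZero k := ⟨by omega⟩
  set N := k ^ n with hN
  have hnN : n < N := Nat.lt_pow_self (n := n) (by omega)
  set f : ℕ → ℕ → List (Fin k) := fun i j => ((w ++ w).drop j).take i with hf
  -- length facts
  have hlen : ∀ j ∈ Finset.range N, ∀ m ≤ n, (f m j).length = m := by
    intro j hj m hm
    simp only [Finset.mem_range] at hj
    simp [hf, List.length_take, List.length_drop, hw]
    omega
  -- allLists m : all lists of length m
  let allL : (m : ℕ) → Finset (List (Fin k)) := fun m =>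
    (Finset.univ : Finset (List.Vector (Fin k) m)).image List.Vector.toList
  have hallcard : ∀ m, (allL m).card = k ^ m := by
    intro m
    rw [Finset.card_image_of_injective _ List.Vector.toList_injective]
    simp [card_vector]
  have hmem_all : ∀ m (u : List (Fin k)), u.length = m → u ∈ allL m := by
    intro m u hu
    exact Finset.mem_image.2 ⟨⟨u, hu⟩, Finset.mem_univ _, rfl⟩
  -- the set of length-n factors is all of allL n
  have hsub : (Finset.range N).image (f n) ⊆ allL n := by
    intro u hu
    obtain ⟨j, hj, rfl⟩ := Finset.mem_image.1 hu
    exact hmem_all n _ (hlen j hj n le_rfl)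
  have heq : (Finset.range N).image (f n) = allL n := by
    apply Finset.eq_of_subset_of_card_le hsub
    rw [hallcard]
    have : ((Finset.range N).image (f n)).card = k ^ n := by
      have : gamma w n = ((Finset.range N).image (f n)).card := by
        simp [gamma, hw, hf]
      omega
    omega
  -- injectivity of f n on range N
  have hinj : Set.InjOn (f n) (Finset.range N) := by
    rw [← Finset.card_image_iff]
    have : gamma w n = ((Finset.range N).image (f n)).card := by
      simp [gamma, hw, hf]
    rw [← this, hdb, Finset.card_range]
  intro i hi
  have hgamma : gamma w i = ((Finset.range N).image (f i)).card := by
    simp [gamma, hw, hf]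
  rcases le_total i n with hin | hni
  · -- i ≤ n
    have hmin : min (k ^ i) (k ^ n) = k ^ i :=
      min_eq_left (Nat.pow_le_pow_right (by omega) hin)
    rw [hgamma, hmin]
    have h1 : (Finset.range N).image (f i) ⊆ allL i := by
      intro u hu
      obtain ⟨j, hj, rfl⟩ := Finset.mem_image.1 hu
      exact hmem_all i _ (hlen j hj i hin)
    have h2 : allL i ⊆ (Finset.range N).image (f i) := by
      intro u hu
      obtain ⟨v, _, rfl⟩ := Finset.mem_image.1 hu
      set u := v.toList with huv
      have hul : u.length = i := v.toList_length
      set u' : List (Fin k) := u ++ List.replicate (n - i) 0 with hu'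
      have hu'l : u'.length = n := by simp [hu', hul]; omega
      have : u' ∈ allL n := hmem_all n u' hu'l
      rw [← heq] at this
      obtain ⟨j, hj, hju⟩ := Finset.mem_image.1 this
      refine Finset.mem_image.2 ⟨j, hj, ?_⟩
      have : f i j = (f n j).take i := by
        simp [hf, List.take_take, Nat.min_eq_left hin]
      rw [this, hju, hu', ← hul, List.take_left]
    have := Finset.Subset.antisymm h1 h2
    rw [this, hallcard]
  · -- n ≤ i
    have hmin : min (k ^ i) (k ^ n) = k ^ n :=
      min_eq_right (Nat.pow_le_pow_right (by omega) hni)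
    rw [hgamma, hmin]
    have hinj' : Set.InjOn (f i) (Finset.range N) := by
      intro a ha b hb hab
      apply hinj ha hb
      have : ∀ j, f n j = (f i j).take n := by
        intro j
        simp [hf, List.take_take, Nat.min_eq_left hni]
      rw [this a, this b, hab]
    rw [Finset.card_image_of_injOn hinj', Finset.card_range]
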